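/- Let σ be a nondegenerate simplex in ℝ^d with a distinguished vertex p and a weight assignment ω on its vertices (only the weights of the vertices of the opposite face σ_p enter F). Define F_ω(p, σ) = D(p, σ)² + dist(p, N_ω(σ_p))² − R_ω(σ_p)², and let H_ω(p, σ) be the signed distance from the weighted center C_ω(σ) to the affine hull of σ_p, taken positive if C_ω(σ) lies on the same side of aff(σ_p) as p and negative otherwise. Then 2 · D(p, σ) · H_ω(p, σ) = F_ω(p, σ) − ω(p)². -/

import Mathlib

noncomputable section

attribute [local instance] Classical.propDecidable

/-- The `ω`-weighted normal space of a simplex with vertex set `τ`: the set of points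
having equal power distance to all (weighted) vertices of `τ`. -/
def wNormal {d : ℕ} (ω : EuclideanSpace ℝ (Fin d) → ℝ) (τ : Finset (EuclideanSpace ℝ (Fin d))) :
    Set (EuclideanSpace ℝ (Fin d)) :=
  {x | ∀ a ∈ τ, ∀ b ∈ τ, ‖x - a‖ ^ 2 - ω a ^ 2 = ‖x - b‖ ^ 2 - ω b ^ 2}

section PumpingAux

variable {d : ℕ}

/-- Two points of the weighted normal space differ by a vector orthogonal to the
vector span of the vertex set. -/
lemma wNormal_sub_mem_orth (ω : EuclideanSpace ℝ (Fin d) → ℝ) (τ : Finset (EuclideanSpace ℝ (Fin d)))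
    {x y : EuclideanSpace ℝ (Fin d)}
    (hx : x ∈ wNormal ω τ) (hy : y ∈ wNormal ω τ) :
    y - x ∈ (vectorSpan ℝ (τ : Set (EuclideanSpace ℝ (Fin d))))ᗮ := by
  rw [Submodule.mem_orthogonal]
  intro v hv
  unfold vectorSpan at hv
  induction hv using Submodule.span_induction with
  | mem v hv =>
    obtain ⟨b, hb, a, ha, rfl⟩ := hv
    have h1 := hx a ha b hb
    have h2 := hy a ha b hb
    rw [norm_sub_sq_real, norm_sub_sq_real] at h1 h2
    show (inner ℝ (b - a) (y - x) : ℝ) = 0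
    rw [inner_sub_left, inner_sub_right, inner_sub_right]
    have c1 := real_inner_comm b y
    have c2 := real_inner_comm b x
    have c3 := real_inner_comm a y
    have c4 := real_inner_comm a x
    linarith
  | zero => simp
  | add v w _ _ h1 h2 => rw [inner_add_left, h1, h2]; ring
  | smul c v _ h => rw [real_inner_smul_left, h]; ring

/-- Translating a point of the weighted normal space by an orthogonal vector stays
in the weighted normal space. -/
lemma wNormal_add_mem (ω : EuclideanSpace ℝ (Fin d) → ℝ) (τ : Finset (EuclideanSpace ℝ (Fin d)))
    {x v : EuclideanSpace ℝ (Fin d)}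
    (hx : x ∈ wNormal ω τ) (hv : v ∈ (vectorSpan ℝ (τ : Set (EuclideanSpace ℝ (Fin d))))ᗮ) :
    x + v ∈ wNormal ω τ := by
  intro a ha b hb
  have h1 := hx a ha b hb
  have hba : (inner ℝ (b - a) v : ℝ) = 0 := by
    rw [Submodule.mem_orthogonal] at hv
    exact hv _ (vsub_mem_vectorSpan ℝ (Finset.mem_coe.mpr hb) (Finset.mem_coe.mpr ha))
  have e1 : x + v - a = (x - a) + v := by abel
  have e2 : x + v - b = (x - b) + v := by abel
  rw [e1, e2, norm_add_sq_real, norm_add_sq_real, inner_sub_left, inner_sub_left]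
  rw [inner_sub_left] at hba
  linarith

/-- A minimizer of the distance to `q` over a coset of `W` is orthogonal to `W`. -/
lemma min_sub_mem_orth {c q : EuclideanSpace ℝ (Fin d)} (W : Submodule ℝ (EuclideanSpace ℝ (Fin d)))
    (h : ∀ v ∈ W, ‖c - q‖ ^ 2 ≤ ‖c + v - q‖ ^ 2) : c - q ∈ Wᗮ := by
  rw [Submodule.mem_orthogonal']
  intro v hv
  rcases eq_or_ne v 0 with rfl | hv0
  · simp
  set a : ℝ := inner ℝ (c - q) v with ha
  have key : ∀ t : ℝ, 0 ≤ 2 * t * a + t ^ 2 * ‖v‖ ^ 2 := by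
    intro t
    have h2 := h (t • v) (W.smul_mem t hv)
    have e : c + t • v - q = (c - q) + t • v := by abel
    rw [e, norm_add_sq_real, real_inner_smul_right, norm_smul, Real.norm_eq_abs,
      mul_pow, sq_abs] at h2
    linarith
  set k : ℝ := ‖v‖ ^ 2 with hk
  have hkpos : 0 < k := by rw [hk]; exact pow_pos (norm_pos_iff.mpr hv0) 2
  have ht := key (-a / k)
  have e1 : 2 * (-a / k) * a + (-a / k) ^ 2 * k = -(a ^ 2) / k := by
    field_simp; ring
  rw [e1] at ht
  have h5 : (0:ℝ) ≤ -(a ^ 2) := by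
    have := mul_nonneg ht hkpos.le
    rwa [div_mul_cancel₀ _ (ne_of_gt hkpos)] at this
  have : a ^ 2 = 0 := le_antisymm (by linarith) (sq_nonneg a)
  exact pow_eq_zero_iff (n := 2) (by norm_num) |>.mp this

lemma infDist_eq_of_min {s : Set (EuclideanSpace ℝ (Fin d))} {x m : EuclideanSpace ℝ (Fin d)}
    (hm : m ∈ s) (h : ∀ y ∈ s, dist x m ≤ dist x y) : Metric.infDist x s = dist x m := by
  refine le_antisymm (Metric.infDist_le_dist_of_mem hm) ?_
  by_contra h'
  push_neg at h'
  obtain ⟨y, hy, hlt⟩ := (Metric.infDist_lt_iff ⟨m, hm⟩).mp h'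
  exact absurd (h y hy) (not_le.mpr hlt)

lemma norm_le_norm_add_of_orth {a b : EuclideanSpace ℝ (Fin d)} (h : (inner ℝ a b : ℝ) = 0) :
    ‖a‖ ≤ ‖a + b‖ := by
  have := norm_add_sq_real a b
  nlinarith [norm_nonneg a, norm_nonneg (a + b), norm_nonneg b]

end PumpingAux

set_option maxHeartbeats 1600000 in
theorem pumping_equation
    (d : ℕ) (σ : Finset (EuclideanSpace ℝ (Fin d)))
    (hind : AffineIndependent ℝ ((↑) : {x // x ∈ σ} → EuclideanSpace ℝ (Fin d)))
    (ω : EuclideanSpace ℝ (Fin d) → ℝ)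
    (p : EuclideanSpace ℝ (Fin d)) (hp : p ∈ σ) (hcard : 2 ≤ σ.card)
    (q0 : EuclideanSpace ℝ (Fin d)) (hq0 : q0 ∈ σ.erase p)
    -- the weighted center of `σ`: the point of `N_ω(σ)` of minimal power distance
    (C : EuclideanSpace ℝ (Fin d)) (hC : C ∈ wNormal ω σ)
    (hCmin : ∀ x ∈ wNormal ω σ, ‖C - p‖ ^ 2 - ω p ^ 2 ≤ ‖x - p‖ ^ 2 - ω p ^ 2)
    -- the weighted center of the face `σ_p = σ.erase p`
    (Cp : EuclideanSpace ℝ (Fin d)) (hCp : Cp ∈ wNormal ω (σ.erase p))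
    (hCpmin : ∀ x ∈ wNormal ω (σ.erase p),
      ‖Cp - q0‖ ^ 2 - ω q0 ^ 2 ≤ ‖x - q0‖ ^ 2 - ω q0 ^ 2)
    (D H F Rsq : ℝ)
    -- the altitude of `p`
    (hD : D = Metric.infDist p (affineSpan ℝ ((σ.erase p : Finset _) : Set (EuclideanSpace ℝ (Fin d)))))
    -- the squared weighted ortho-radius of `σ_p`
    (hRsq : Rsq = ‖Cp - q0‖ ^ 2 - ω q0 ^ 2)
    -- the excentricity: signed distance of `C_ω(σ)` from `aff(σ_p)`
    (hH : H = if (affineSpan ℝ ((σ.erase p : Finset _) : Set (EuclideanSpace ℝ (Fin d)))).WSameSide C p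
        then Metric.infDist C (affineSpan ℝ ((σ.erase p : Finset _) : Set (EuclideanSpace ℝ (Fin d))))
        else -Metric.infDist C (affineSpan ℝ ((σ.erase p : Finset _) : Set (EuclideanSpace ℝ (Fin d)))))
    (hF : F = D ^ 2 + (Metric.infDist p (wNormal ω (σ.erase p))) ^ 2 - Rsq) :
    2 * D * H = F - ω p ^ 2 := by
  classical
  set τ : Finset (EuclideanSpace ℝ (Fin d)) := σ.erase p with hτdef
  set A : AffineSubspace ℝ (EuclideanSpace ℝ (Fin d)) :=
    affineSpan ℝ ((τ : Finset _) : Set (EuclideanSpace ℝ (Fin d))) with hAdef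
  set U : Submodule ℝ (EuclideanSpace ℝ (Fin d)) :=
    vectorSpan ℝ ((τ : Finset _) : Set (EuclideanSpace ℝ (Fin d))) with hUdef
  have hq0A : q0 ∈ A := mem_affineSpan ℝ (Finset.mem_coe.mpr hq0)
  haveI : Nonempty A := ⟨⟨q0, hq0A⟩⟩
  have hdir : A.direction = U := direction_affineSpan ℝ _
  -- the foot of the altitude of `p`
  obtain ⟨π, hπA, hπO⟩ : ∃ π, π ∈ A ∧ p - π ∈ Uᗮ := by
    refine ⟨EuclideanGeometry.orthogonalProjection A p, EuclideanGeometry.orthogonalProjection_mem p, ?_⟩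
    rw [← hdir]
    exact EuclideanGeometry.vsub_orthogonalProjection_mem_direction_orthogonal A p
  have hτσ : ∀ x ∈ τ, x ∈ σ := fun x hx => Finset.mem_of_mem_erase hx
  have hCτ : C ∈ wNormal ω τ := fun a ha b hb => hC a (hτσ a ha) b (hτσ b hb)
  -- `w = C - Cp` is orthogonal to `U`
  have hwU : C - Cp ∈ Uᗮ := wNormal_sub_mem_orth ω τ hCp hCτ
  -- `Cp` lies in the affine hull of the face
  have hCpq0 : Cp - q0 ∈ U := by
    have h1 : Cp - q0 ∈ Uᗮᗮ := by
      refine min_sub_mem_orth Uᗮ fun v hv => ?_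
      have := hCpmin (Cp + v) (wNormal_add_mem ω τ hCp hv)
      linarith
    rwa [Submodule.orthogonal_orthogonal] at h1
  have hCpA : Cp ∈ A := by
    have := AffineSubspace.vadd_mem_of_mem_direction (hdir ▸ hCpq0) hq0A
    simpa [vadd_eq_add, sub_add_cancel] using this
  -- `C - p` lies in the vector span of `σ`
  have hCpV : C - p ∈ vectorSpan ℝ (σ : Set (EuclideanSpace ℝ (Fin d))) := by
    have h2 : C - p ∈ (vectorSpan ℝ (σ : Set (EuclideanSpace ℝ (Fin d))))ᗮᗮ := by
      refine min_sub_mem_orth _ fun v hv => ?_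
      have := hCmin (C + v) (wNormal_add_mem ω σ hC hv)
      linarith
    rwa [Submodule.orthogonal_orthogonal] at h2
  -- the vector span of `σ` is contained in `U ⊔ ℝ ∙ (p - π)`
  have hkey : ∀ a ∈ σ, a - p ∈ U ⊔ ℝ ∙ (p - π) := by
    intro a ha
    by_cases hap : a = p
    · simp [hap]
    · have haτ : a ∈ τ := Finset.mem_erase.mpr ⟨hap, ha⟩
      have haU : a - π ∈ U := by
        have := AffineSubspace.vsub_mem_direction (mem_affineSpan ℝ (Finset.mem_coe.mpr haτ)) hπA
        rwa [hdir, vsub_eq_sub] at this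
      have : a - p = (a - π) - (p - π) := by abel
      rw [this]
      exact Submodule.sub_mem _ (Submodule.mem_sup_left haU)
        (Submodule.mem_sup_right (Submodule.mem_span_singleton_self _))
  have hV : vectorSpan ℝ (σ : Set (EuclideanSpace ℝ (Fin d))) ≤ U ⊔ ℝ ∙ (p - π) := by
    rw [vectorSpan_def]
    refine Submodule.span_le.mpr ?_
    rintro _ ⟨b, hb, a, ha, rfl⟩
    show b - a ∈ _
    have : b - a = (b - p) - (a - p) := by abel
    rw [this]
    exact Submodule.sub_mem _ (hkey b hb) (hkey a ha)
  -- decompose `C - p`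
  obtain ⟨z, hz, y, hy, hzy⟩ := Submodule.mem_sup.mp (hV hCpV)
  obtain ⟨r, rfl⟩ := Submodule.mem_span_singleton.mp hy
  -- `Cp - π ∈ U`
  have hm : Cp - π ∈ U := by
    have := AffineSubspace.vsub_mem_direction hCpA hπA
    rwa [hdir, vsub_eq_sub] at this
  -- the component of `C - p` along `U` is `Cp - π`, forcing `C - Cp` parallel to `p - π`
  have hz2 : z = (C - p) - r • (p - π) := by rw [← hzy]; abel
  have hz'U : z - (Cp - π) ∈ U := Submodule.sub_mem _ hz hm
  have hz'O : z - (Cp - π) ∈ Uᗮ := by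
    have e2 : z - (Cp - π) = ((C - Cp) - (p - π)) - r • (p - π) := by rw [hz2]; abel
    rw [e2]
    exact Submodule.sub_mem _ (Submodule.sub_mem _ hwU hπO) (Submodule.smul_mem _ _ hπO)
  have hz'0 : z - (Cp - π) = 0 := by
    rw [← inner_self_eq_zero (𝕜 := ℝ)]
    exact Submodule.inner_right_of_mem_orthogonal hz'U hz'O
  have hw : C - Cp = (1 + r) • (p - π) := by
    have h4 : Cp - π = (C - p) - r • (p - π) := by
      rw [← hz2]; exact (sub_eq_zero.mp hz'0).symm
    have h5 : C - p = (Cp - π) + r • (p - π) := by rw [h4]; abel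
    calc C - Cp = (C - p) - (Cp - π) + (p - π) := by abel
      _ = r • (p - π) + (p - π) := by rw [h5]; abel
      _ = (1 + r) • (p - π) := by rw [add_smul, one_smul]; abel
  set t : ℝ := 1 + r with htdef
  -- `p` is not in the affine hull of the face
  have hpA : p ∉ A := by
    have himg : (Subtype.val '' (Set.univ \ {(⟨p, hp⟩ : {x // x ∈ σ})}))
        = ((τ : Finset _) : Set (EuclideanSpace ℝ (Fin d))) := by
      ext x
      constructor
      · rintro ⟨⟨y, hyσ⟩, hy, rfl⟩
        simp only [Set.mem_diff, Set.mem_univ, Set.mem_singleton_iff, true_and] at hy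
        have : y ≠ p := fun h => hy (by simpa [Subtype.ext_iff] using h)
        exact Finset.mem_coe.mpr (Finset.mem_erase.mpr ⟨this, hyσ⟩)
      · intro hx
        have hx' := Finset.mem_erase.mp (Finset.mem_coe.mp hx)
        exact ⟨⟨x, hx'.2⟩, by simp [Subtype.ext_iff, hx'.1], rfl⟩
    have := hind.notMem_affineSpan_diff ⟨p, hp⟩ Set.univ
    rwa [himg] at this
  have hu0 : p - π ≠ 0 := fun h => hpA (sub_eq_zero.mp h ▸ hπA)
  -- computation of the three distances
  have hDval : Metric.infDist p ((A : Set (EuclideanSpace ℝ (Fin d)))) = ‖p - π‖ := by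
    rw [infDist_eq_of_min (SetLike.mem_coe.mpr hπA) ?_, dist_eq_norm]
    intro y hy
    rw [dist_eq_norm, dist_eq_norm]
    have hπy : π - y ∈ U := by
      have := AffineSubspace.vsub_mem_direction hπA (SetLike.mem_coe.mp hy)
      rwa [hdir, vsub_eq_sub] at this
    have horth : (inner ℝ (p - π) (π - y) : ℝ) = 0 := by
      have := Submodule.inner_right_of_mem_orthogonal hπy hπO
      rw [real_inner_comm] at this
      exact this
    have := norm_le_norm_add_of_orth horth
    have e : (p - π) + (π - y) = p - y := by abel
    rwa [e] at this
  have hNval : Metric.infDist p (wNormal ω τ) = ‖π - Cp‖ := by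
    have hmem : Cp + (p - π) ∈ wNormal ω τ := wNormal_add_mem ω τ hCp hπO
    have hdistm : dist p (Cp + (p - π)) = ‖π - Cp‖ := by
      rw [dist_eq_norm]
      congr 1
      abel
    rw [infDist_eq_of_min hmem ?_, hdistm]
    intro y hy
    rw [dist_eq_norm, dist_eq_norm]
    have e0 : p - (Cp + (p - π)) = π - Cp := by abel
    rw [e0]
    have hyU : y - Cp ∈ Uᗮ := wNormal_sub_mem_orth ω τ hCp hy
    have horth : (inner ℝ (π - Cp) ((p - π) - (y - Cp)) : ℝ) = 0 := by
      have hπCp : π - Cp ∈ U := by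
        have := AffineSubspace.vsub_mem_direction hπA hCpA
        rwa [hdir, vsub_eq_sub] at this
      exact Submodule.inner_right_of_mem_orthogonal hπCp
        (Submodule.sub_mem _ hπO hyU)
    have := norm_le_norm_add_of_orth horth
    have e : (π - Cp) + ((p - π) - (y - Cp)) = p - y := by abel
    rwa [e] at this
  have hCdist : Metric.infDist C ((A : Set (EuclideanSpace ℝ (Fin d)))) = ‖C - Cp‖ := by
    rw [infDist_eq_of_min (SetLike.mem_coe.mpr hCpA) ?_, dist_eq_norm]
    intro y hy
    rw [dist_eq_norm, dist_eq_norm]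
    have hCpy : Cp - y ∈ U := by
      have := AffineSubspace.vsub_mem_direction hCpA (SetLike.mem_coe.mp hy)
      rwa [hdir, vsub_eq_sub] at this
    have horth : (inner ℝ (C - Cp) (Cp - y) : ℝ) = 0 := by
      have := Submodule.inner_right_of_mem_orthogonal hCpy hwU
      rw [real_inner_comm] at this
      exact this
    have := norm_le_norm_add_of_orth horth
    have e : (C - Cp) + (Cp - y) = C - y := by abel
    rwa [e] at this
  -- the side characterization
  have hside_pos : 0 ≤ t → A.WSameSide C p := by
    intro ht
    refine ⟨Cp, hCpA, π, hπA, ?_⟩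
    rw [vsub_eq_sub, vsub_eq_sub, hw]
    exact SameRay.sameRay_nonneg_smul_left _ ht
  have hside_neg : t < 0 → ¬ A.WSameSide C p := by
    intro ht hss
    obtain ⟨p₁, hp₁, p₂, hp₂, hray⟩ := hss
    set f : EuclideanSpace ℝ (Fin d) →ₗ[ℝ] EuclideanSpace ℝ (Fin d) :=
      (Uᗮ).subtype.comp (Uᗮ.orthogonalProjectionOnto).toLinearMap with hfdef
    have hfid : ∀ x ∈ Uᗮ, f x = x := fun x hx => Submodule.starProjection_eq_self_iff.mpr hx
    have hfz : ∀ x ∈ U, f x = 0 := by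
      intro x hx
      have : Uᗮ.orthogonalProjectionOnto x = 0 :=
        Submodule.orthogonalProjectionOnto_apply_of_mem_orthogonal
          (U.le_orthogonal_orthogonal hx)
      simp [hfdef, this]
    have hray' := hray.map f
    rw [vsub_eq_sub, vsub_eq_sub] at hray'
    have hC1 : f (C - p₁) = t • (p - π) := by
      have e : C - p₁ = (C - Cp) + (Cp - p₁) := by abel
      have hCp1 : Cp - p₁ ∈ U := by
        have := AffineSubspace.vsub_mem_direction hCpA hp₁
        rwa [hdir, vsub_eq_sub] at this
      rw [e, map_add, hfid _ hwU, hfz _ hCp1, add_zero, hw]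
    have hC2 : f (p - p₂) = p - π := by
      have e : p - p₂ = (p - π) + (π - p₂) := by abel
      have hπp2 : π - p₂ ∈ U := by
        have := AffineSubspace.vsub_mem_direction hπA hp₂
        rwa [hdir, vsub_eq_sub] at this
      rw [e, map_add, hfid _ hπO, hfz _ hπp2, add_zero]
    rw [hC1, hC2] at hray'
    rcases hray' with h | h | ⟨r₁, r₂, hr₁, hr₂, hr⟩
    · rcases smul_eq_zero.mp h with h' | h'
      · linarith
      · exact hu0 h'
    · exact hu0 h
    · rw [smul_smul] at hr
      have : (r₁ * t - r₂) • (p - π) = 0 := by rw [sub_smul, hr]; abel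
      rcases smul_eq_zero.mp this with h' | h'
      · have h6 : r₁ * t - r₂ = 0 := h'
        have h7 : r₁ * t < 0 := mul_neg_of_pos_of_neg hr₁ ht
        linarith
      · exact hu0 h'
  -- value of `H`
  have hHval : H = t * ‖p - π‖ := by
    rw [hH]
    split_ifs with hss
    · have ht : 0 ≤ t := by
        by_contra h
        exact hside_neg (lt_of_not_ge h) hss
      rw [hCdist, hw, norm_smul, Real.norm_eq_abs, abs_of_nonneg ht]
    · have ht : t < 0 := by
        by_contra h
        exact hss (hside_pos (not_lt.mp h))
      rw [hCdist, hw, norm_smul, Real.norm_eq_abs, abs_of_neg ht]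
      ring
  -- the main power equation
  have eq1 : ‖C - p‖ ^ 2 - ω p ^ 2 = ‖C - q0‖ ^ 2 - ω q0 ^ 2 :=
    hC p hp q0 (hτσ q0 hq0)
  have hnorm1 : ‖C - p‖ ^ 2 = ‖Cp - π‖ ^ 2 + (t - 1) ^ 2 * ‖p - π‖ ^ 2 := by
    have e : C - p = (Cp - π) + ((C - Cp) - (p - π)) := by abel
    have horth : (inner ℝ (Cp - π) ((C - Cp) - (p - π)) : ℝ) = 0 :=
      Submodule.inner_right_of_mem_orthogonal hm (Submodule.sub_mem _ hwU hπO)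
    have e2 : (C - Cp) - (p - π) = (t - 1) • (p - π) := by
      rw [hw, sub_smul, one_smul]
    rw [e, norm_add_sq_real, horth, e2, norm_smul, Real.norm_eq_abs, mul_pow, sq_abs]
    ring
  have hnorm2 : ‖C - q0‖ ^ 2 = ‖Cp - q0‖ ^ 2 + t ^ 2 * ‖p - π‖ ^ 2 := by
    have e : C - q0 = (Cp - q0) + (C - Cp) := by abel
    have horth : (inner ℝ (Cp - q0) (C - Cp) : ℝ) = 0 :=
      Submodule.inner_right_of_mem_orthogonal hCpq0 hwU
    rw [e, norm_add_sq_real, horth, hw, norm_smul, Real.norm_eq_abs, mul_pow, sq_abs]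
    ring
  rw [hnorm1, hnorm2] at eq1
  -- final computation
  rw [hF, hD, hHval, hDval, hNval, hRsq, norm_sub_rev π Cp]
  linear_combination -eq1
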